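/- Consider a POP and a point x* such that (x*,λ*) satisfies the KKT conditions for some λ*, and MFCQ holds at x*. Assume that the infimum defining ω(x) is attained for every x in a neighborhood of x*, and that the following local Hölder error bound holds: there exist τ > 0, γ > 0 and η > 0 such that dist((x,λ), {x*} × Λ*) ≤ τ · σ(x,λ)^γ whenever ‖x − x*‖ ≤ η and dist(λ, Λ*) ≤ η. Then there exists ε₁ > 0 such that every x with ‖x − x*‖ ≤ ε₁ satisfies ‖x − x*‖ ≤ τ · ω(x)^γ. -/

import Mathlib

open MvPolynomial Metric Filter Matrix

/-- Evaluation of a polynomial at a Euclidean point. -/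
noncomputable def peval {n : ℕ} (x : EuclideanSpace ℝ (Fin n)) (p : MvPolynomial (Fin n) ℝ) : ℝ :=
  MvPolynomial.eval (fun i => x i) p

/-- Gradient of a polynomial at a point. -/
noncomputable def pgrad {n : ℕ} (p : MvPolynomial (Fin n) ℝ) (x : EuclideanSpace ℝ (Fin n)) :
    EuclideanSpace ℝ (Fin n) :=
  WithLp.toLp 2 (fun i => peval x (MvPolynomial.pderiv i p))

/-- KKT residual σ(x,λ). -/
noncomputable def kktRes {n m : ℕ} (f : MvPolynomial (Fin n) ℝ)
    (g : Fin m → MvPolynomial (Fin n) ℝ) (Eqs : Finset (Fin m))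
    (x : EuclideanSpace ℝ (Fin n)) (lam : EuclideanSpace ℝ (Fin m)) : ℝ :=
  ‖pgrad f x - ∑ i, lam i • pgrad (g i) x‖
    + Real.sqrt (∑ j ∈ Eqs, (peval x (g j)) ^ 2)
    + Real.sqrt (∑ i ∈ Eqsᶜ, (max (-(peval x (g i))) 0) ^ 2)
    + |∑ i ∈ Eqsᶜ, lam i * peval x (g i)|
    + Real.sqrt (∑ i ∈ Eqsᶜ, (max (-(lam i)) 0) ^ 2)

/-- KKT conditions at (x, λ): stationarity of the Lagrangian, primal feasibility,
dual feasibility, and complementarity. -/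
def IsKKT {n m : ℕ} (f : MvPolynomial (Fin n) ℝ) (g : Fin m → MvPolynomial (Fin n) ℝ)
    (Eqs : Finset (Fin m)) (x : EuclideanSpace ℝ (Fin n)) (lam : EuclideanSpace ℝ (Fin m)) : Prop :=
  pgrad f x - ∑ i, lam i • pgrad (g i) x = 0 ∧
  (∀ j ∈ Eqs, peval x (g j) = 0) ∧
  (∀ i ∉ Eqs, 0 ≤ peval x (g i) ∧ 0 ≤ lam i ∧ lam i * peval x (g i) = 0)

/-- ω(x) = inf over multipliers of the KKT residual. -/
noncomputable def omga {n m : ℕ} (f : MvPolynomial (Fin n) ℝ) (g : Fin m → MvPolynomial (Fin n) ℝ)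
    (Eqs : Finset (Fin m)) (x : EuclideanSpace ℝ (Fin n)) : ℝ :=
  ⨅ lam : EuclideanSpace ℝ (Fin m), kktRes f g Eqs x lam

/-- Mangasarian–Fromovitz constraint qualification at x. -/
def MFCQat {n m : ℕ} (g : Fin m → MvPolynomial (Fin n) ℝ) (Eqs : Finset (Fin m))
    (x : EuclideanSpace ℝ (Fin n)) : Prop :=
  ∃ v : EuclideanSpace ℝ (Fin n),
    (∀ i ∉ Eqs, peval x (g i) = 0 → ∑ k, pgrad (g i) x k * v k < 0) ∧
    (∀ j ∈ Eqs, ∑ k, pgrad (g j) x k * v k = 0) ∧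
    LinearIndependent ℝ (fun j : {j // j ∈ Eqs} => pgrad (g j.1) x)

/-- Set of optimal multipliers Λ* at x*. -/
def dualSols {n m : ℕ} (f : MvPolynomial (Fin n) ℝ) (g : Fin m → MvPolynomial (Fin n) ℝ)
    (Eqs : Finset (Fin m)) (x : EuclideanSpace ℝ (Fin n)) : Set (EuclideanSpace ℝ (Fin m)) :=
  {lam | IsKKT f g Eqs x lam}

/-- A primal-dual pair as a point of the Euclidean (L²) product space ℝⁿ × ℝᵐ. -/
noncomputable def pairL2 {n m : ℕ} (x : EuclideanSpace ℝ (Fin n)) (lam : EuclideanSpace ℝ (Fin m)) :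
    WithLp 2 (EuclideanSpace ℝ (Fin n) × EuclideanSpace ℝ (Fin m)) :=
  (WithLp.equiv 2 _).symm (x, lam)

/-- The set {x*} × Λ* inside the Euclidean (L²) product space. -/
def primalDualSet {n m : ℕ} (f : MvPolynomial (Fin n) ℝ) (g : Fin m → MvPolynomial (Fin n) ℝ)
    (Eqs : Finset (Fin m)) (xs : EuclideanSpace ℝ (Fin n)) :
    Set (WithLp 2 (EuclideanSpace ℝ (Fin n) × EuclideanSpace ℝ (Fin m))) :=
  {z | (WithLp.equiv 2 _ z).1 = xs ∧ (WithLp.equiv 2 _ z).2 ∈ dualSols f g Eqs xs}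

open scoped RealInnerProductSpace

/- AUX PART (to be inserted) -/
section Aux

lemma sqrt_sum_sq_eq_zero' {ι : Type*} {s : Finset ι} {f : ι → ℝ}
    (h : Real.sqrt (∑ i ∈ s, f i ^ 2) = 0) : ∀ i ∈ s, f i = 0 := by
  have hle := Real.sqrt_eq_zero'.mp h
  have hge : 0 ≤ ∑ i ∈ s, f i ^ 2 := Finset.sum_nonneg fun i _ => sq_nonneg _
  have hz : ∑ i ∈ s, f i ^ 2 = 0 := le_antisymm hle hge
  intro i hi
  have := (Finset.sum_eq_zero_iff_of_nonneg (fun j _ => sq_nonneg (f j))).mp hz i hi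
  exact pow_eq_zero_iff two_ne_zero |>.mp this

lemma single_le_sqrt_sum_sq {ι : Type*} {s : Finset ι} {f : ι → ℝ}
    (hf : ∀ i ∈ s, 0 ≤ f i) {i : ι} (hi : i ∈ s) : f i ≤ Real.sqrt (∑ j ∈ s, f j ^ 2) := by
  calc f i = Real.sqrt (f i ^ 2) := by rw [Real.sqrt_sq (hf i hi)]
  _ ≤ _ := Real.sqrt_le_sqrt (Finset.single_le_sum (fun j _ => sq_nonneg (f j)) hi)

lemma my_le_infDist {α : Type*} [PseudoMetricSpace α] {s : Set α} {x : α} {d : ℝ}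
    (hs : s.Nonempty) (h : ∀ y ∈ s, d ≤ dist x y) : d ≤ Metric.infDist x s := by
  haveI := hs.to_subtype
  rw [Metric.infDist_eq_iInf]
  exact le_ciInf fun y => h y y.2

lemma continuous_peval {n : ℕ} (p : MvPolynomial (Fin n) ℝ) :
    Continuous fun x : EuclideanSpace ℝ (Fin n) => peval x p := by
  have h : Continuous fun x : EuclideanSpace ℝ (Fin n) => (fun i => x i : Fin n → ℝ) :=
    continuous_pi fun i => (continuous_apply i).comp (PiLp.continuous_ofLp 2 _)
  exact (MvPolynomial.continuous_eval p).comp h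

lemma continuous_pgrad {n : ℕ} (p : MvPolynomial (Fin n) ℝ) :
    Continuous fun x : EuclideanSpace ℝ (Fin n) => pgrad p x := by
  apply (PiLp.continuous_toLp 2 (fun _ : Fin n => ℝ)).comp
  exact continuous_pi fun i => continuous_peval (MvPolynomial.pderiv i p)

lemma continuous_lam_apply {m : ℕ} (i : Fin m) :
    Continuous fun lam : EuclideanSpace ℝ (Fin m) => lam i :=
  (continuous_apply i).comp (PiLp.continuous_ofLp 2 _)

variable {n m : ℕ} (f : MvPolynomial (Fin n) ℝ) (g : Fin m → MvPolynomial (Fin n) ℝ)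
  (Eqs : Finset (Fin m))

lemma tendsto_kktRes {ι : Type*} {l : Filter ι} {x : ι → EuclideanSpace ℝ (Fin n)}
    {lam : ι → EuclideanSpace ℝ (Fin m)} {xs : EuclideanSpace ℝ (Fin n)}
    {lamb : EuclideanSpace ℝ (Fin m)}
    (hx : Filter.Tendsto x l (nhds xs)) (hl : Filter.Tendsto lam l (nhds lamb)) :
    Filter.Tendsto (fun k => kktRes f g Eqs (x k) (lam k)) l
      (nhds (kktRes f g Eqs xs lamb)) := by
  have hpe : ∀ q : MvPolynomial (Fin n) ℝ,
      Filter.Tendsto (fun k => peval (x k) q) l (nhds (peval xs q)) :=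
    fun q => ((continuous_peval q).tendsto xs).comp hx
  have hgr : ∀ q : MvPolynomial (Fin n) ℝ,
      Filter.Tendsto (fun k => pgrad q (x k)) l (nhds (pgrad q xs)) :=
    fun q => ((continuous_pgrad q).tendsto xs).comp hx
  have hla : ∀ i : Fin m, Filter.Tendsto (fun k => lam k i) l (nhds (lamb i)) :=
    fun i => ((continuous_lam_apply i).tendsto lamb).comp hl
  unfold kktRes
  apply Filter.Tendsto.add
  apply Filter.Tendsto.add
  apply Filter.Tendsto.add
  apply Filter.Tendsto.add
  · exact ((hgr f).sub (tendsto_finset_sum _ fun i _ => (hla i).smul (hgr (g i)))).norm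
  · exact (Real.continuous_sqrt.tendsto _).comp
      (tendsto_finset_sum _ fun j _ => (hpe (g j)).pow 2)
  · exact (Real.continuous_sqrt.tendsto _).comp
      (tendsto_finset_sum _ fun i _ => ((hpe (g i)).neg.max tendsto_const_nhds).pow 2)
  · exact (tendsto_finset_sum _ fun i _ => (hla i).mul (hpe (g i))).abs
  · exact (Real.continuous_sqrt.tendsto _).comp
      (tendsto_finset_sum _ fun i _ => ((hla i).neg.max tendsto_const_nhds).pow 2)

variable {x : EuclideanSpace ℝ (Fin n)} {lam : EuclideanSpace ℝ (Fin m)}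

lemma kktRes_nonneg : 0 ≤ kktRes f g Eqs x lam := by
  unfold kktRes
  have := norm_nonneg (pgrad f x - ∑ i, lam i • pgrad (g i) x)
  have := Real.sqrt_nonneg (∑ j ∈ Eqs, (peval x (g j)) ^ 2)
  have := Real.sqrt_nonneg (∑ i ∈ Eqsᶜ, (max (-(peval x (g i))) 0) ^ 2)
  have := abs_nonneg (∑ i ∈ Eqsᶜ, lam i * peval x (g i))
  have := Real.sqrt_nonneg (∑ i ∈ Eqsᶜ, (max (-(lam i)) 0) ^ 2)
  linarith

lemma stat_le_kktRes :
    ‖pgrad f x - ∑ i, lam i • pgrad (g i) x‖ ≤ kktRes f g Eqs x lam := by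
  unfold kktRes
  have := Real.sqrt_nonneg (∑ j ∈ Eqs, (peval x (g j)) ^ 2)
  have := Real.sqrt_nonneg (∑ i ∈ Eqsᶜ, (max (-(peval x (g i))) 0) ^ 2)
  have := abs_nonneg (∑ i ∈ Eqsᶜ, lam i * peval x (g i))
  have := Real.sqrt_nonneg (∑ i ∈ Eqsᶜ, (max (-(lam i)) 0) ^ 2)
  linarith

lemma comp_le_kktRes :
    |∑ i ∈ Eqsᶜ, lam i * peval x (g i)| ≤ kktRes f g Eqs x lam := by
  unfold kktRes
  have := norm_nonneg (pgrad f x - ∑ i, lam i • pgrad (g i) x)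
  have := Real.sqrt_nonneg (∑ j ∈ Eqs, (peval x (g j)) ^ 2)
  have := Real.sqrt_nonneg (∑ i ∈ Eqsᶜ, (max (-(peval x (g i))) 0) ^ 2)
  have := Real.sqrt_nonneg (∑ i ∈ Eqsᶜ, (max (-(lam i)) 0) ^ 2)
  linarith

lemma dual_le_kktRes {i : Fin m} (hi : i ∈ Eqsᶜ) :
    max (-(lam i)) 0 ≤ kktRes f g Eqs x lam := by
  have h1 : max (-(lam i)) 0 ≤ Real.sqrt (∑ i ∈ Eqsᶜ, (max (-(lam i)) 0) ^ 2) :=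
    single_le_sqrt_sum_sq (f := fun j => max (-(lam j)) 0) (fun j _ => le_max_right _ _) hi
  unfold kktRes
  have := norm_nonneg (pgrad f x - ∑ i, lam i • pgrad (g i) x)
  have := Real.sqrt_nonneg (∑ j ∈ Eqs, (peval x (g j)) ^ 2)
  have := Real.sqrt_nonneg (∑ i ∈ Eqsᶜ, (max (-(peval x (g i))) 0) ^ 2)
  have := abs_nonneg (∑ i ∈ Eqsᶜ, lam i * peval x (g i))
  linarith

lemma kktRes_eq_zero_of_isKKT (h : IsKKT f g Eqs x lam) : kktRes f g Eqs x lam = 0 := by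
  obtain ⟨h1, h2, h3⟩ := h
  unfold kktRes
  rw [h1]
  have e2 : ∑ j ∈ Eqs, (peval x (g j)) ^ 2 = 0 :=
    Finset.sum_eq_zero fun j hj => by rw [h2 j hj]; ring
  have e3 : ∑ i ∈ Eqsᶜ, (max (-(peval x (g i))) 0) ^ 2 = 0 :=
    Finset.sum_eq_zero fun i hi => by
      have := (h3 i (Finset.mem_compl.mp hi)).1
      rw [max_eq_right (by linarith)]; ring
  have e4 : ∑ i ∈ Eqsᶜ, lam i * peval x (g i) = 0 :=
    Finset.sum_eq_zero fun i hi => (h3 i (Finset.mem_compl.mp hi)).2.2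
  have e5 : ∑ i ∈ Eqsᶜ, (max (-(lam i)) 0) ^ 2 = 0 :=
    Finset.sum_eq_zero fun i hi => by
      have := (h3 i (Finset.mem_compl.mp hi)).2.1
      rw [max_eq_right (by linarith)]; ring
  rw [e2, e3, e4, e5]
  simp

lemma isKKT_of_kktRes_eq_zero (h : kktRes f g Eqs x lam = 0) : IsKKT f g Eqs x lam := by
  have n1 := norm_nonneg (pgrad f x - ∑ i, lam i • pgrad (g i) x)
  have n2 := Real.sqrt_nonneg (∑ j ∈ Eqs, (peval x (g j)) ^ 2)
  have n3 := Real.sqrt_nonneg (∑ i ∈ Eqsᶜ, (max (-(peval x (g i))) 0) ^ 2)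
  have n4 := abs_nonneg (∑ i ∈ Eqsᶜ, lam i * peval x (g i))
  have n5 := Real.sqrt_nonneg (∑ i ∈ Eqsᶜ, (max (-(lam i)) 0) ^ 2)
  unfold kktRes at h
  have z1 : ‖pgrad f x - ∑ i, lam i • pgrad (g i) x‖ = 0 := by linarith
  have z2 : Real.sqrt (∑ j ∈ Eqs, (peval x (g j)) ^ 2) = 0 := by linarith
  have z3 : Real.sqrt (∑ i ∈ Eqsᶜ, (max (-(peval x (g i))) 0) ^ 2) = 0 := by linarith
  have z4 : |∑ i ∈ Eqsᶜ, lam i * peval x (g i)| = 0 := by linarith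
  have z5 : Real.sqrt (∑ i ∈ Eqsᶜ, (max (-(lam i)) 0) ^ 2) = 0 := by linarith
  have hprim : ∀ i ∉ Eqs, 0 ≤ peval x (g i) := by
    intro i hi
    have := sqrt_sum_sq_eq_zero' z3 i (Finset.mem_compl.mpr hi)
    have h' : -peval x (g i) ≤ 0 := by
      calc -peval x (g i) ≤ max (-(peval x (g i))) 0 := le_max_left _ _
      _ = 0 := this
    linarith
  have hdual : ∀ i ∉ Eqs, 0 ≤ lam i := by
    intro i hi
    have := sqrt_sum_sq_eq_zero' z5 i (Finset.mem_compl.mpr hi)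
    have h' : -lam i ≤ 0 := by
      calc -lam i ≤ max (-(lam i)) 0 := le_max_left _ _
      _ = 0 := this
    linarith
  refine ⟨norm_eq_zero.mp z1, fun j hj => sqrt_sum_sq_eq_zero' z2 j hj, fun i hi => ?_⟩
  refine ⟨hprim i hi, hdual i hi, ?_⟩
  have hsum : ∑ i ∈ Eqsᶜ, lam i * peval x (g i) = 0 := abs_eq_zero.mp z4
  exact (Finset.sum_eq_zero_iff_of_nonneg (fun j hj =>
    mul_nonneg (hdual j (Finset.mem_compl.mp hj)) (hprim j (Finset.mem_compl.mp hj)))).mp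
    hsum i (Finset.mem_compl.mpr hi)

end Aux

set_option maxHeartbeats 1600000 in
lemma near_dualSols {n m : ℕ} {f : MvPolynomial (Fin n) ℝ} {g : Fin m → MvPolynomial (Fin n) ℝ}
    {Eqs : Finset (Fin m)} {xs : EuclideanSpace ℝ (Fin n)}
    (hkkt : ∃ lams, IsKKT f g Eqs xs lams) (hmfcq : MFCQat g Eqs xs) {η : ℝ} (hη : 0 < η) :
    ∃ ε > (0:ℝ), ∃ c > (0:ℝ), ∀ x lam, ‖x - xs‖ ≤ ε → kktRes f g Eqs x lam ≤ c →
      Metric.infDist lam (dualSols f g Eqs xs) ≤ η := by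
  obtain ⟨lams, hkkt⟩ := hkkt
  by_contra hcon
  push_neg at hcon
  have hseq : ∀ k : ℕ, ∃ x lam, ‖x - xs‖ ≤ 1/((k:ℝ)+1) ∧ kktRes f g Eqs x lam ≤ 1/((k:ℝ)+1) ∧
      η < Metric.infDist lam (dualSols f g Eqs xs) := by
    intro k
    have hk : (0:ℝ) < 1/((k:ℝ)+1) := by positivity
    exact hcon (1/((k:ℝ)+1)) hk (1/((k:ℝ)+1)) hk
  choose x lam hx hres hd using hseq
  have hone : Filter.Tendsto (fun k : ℕ => 1/((k:ℝ)+1)) Filter.atTop (nhds 0) :=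
    tendsto_one_div_add_atTop_nhds_zero_nat
  have hxlim : Filter.Tendsto x Filter.atTop (nhds xs) := by
    rw [tendsto_iff_dist_tendsto_zero]
    exact squeeze_zero (fun k => dist_nonneg) (fun k => by rw [dist_eq_norm]; exact hx k) hone
  set S := dualSols f g Eqs xs with hS_def
  set t : ℕ → ℝ := fun k => 1/(1+‖lam k‖) with ht_def
  have ht0 : ∀ k, 0 < t k := fun k => by positivity
  have ht1 : ∀ k, t k ≤ 1 := fun k => by
    rw [ht_def]
    rw [div_le_one (by positivity)]
    linarith [norm_nonneg (lam k)]
  set μ : ℕ → EuclideanSpace ℝ (Fin m) := fun k => t k • lam k with hμ_def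
  have hμnorm : ∀ k, ‖μ k‖ = 1 - t k := by
    intro k
    rw [hμ_def]
    simp only []
    rw [norm_smul, Real.norm_eq_abs, abs_of_pos (ht0 k), ht_def]
    have h1 : (0:ℝ) < 1 + ‖lam k‖ := by positivity
    field_simp
    ring
  have hμapp : ∀ k i, μ k i = t k * lam k i := fun k i => rfl
  have hmemK : ∀ k, (μ k, t k) ∈
      Metric.closedBall (0 : EuclideanSpace ℝ (Fin m)) 1 ×ˢ Set.Icc (0:ℝ) 1 := by
    intro k
    constructor
    · rw [Metric.mem_closedBall, dist_zero_right, hμnorm k]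
      linarith [ht0 k]
    · exact ⟨(ht0 k).le, ht1 k⟩
  obtain ⟨⟨muL, tL⟩, hmemL, φ, hφ, hlim⟩ :=
    ((isCompact_closedBall (0 : EuclideanSpace ℝ (Fin m)) 1).prod isCompact_Icc).tendsto_subseq
      hmemK
  have hμlim : Filter.Tendsto (fun k => μ (φ k)) Filter.atTop (nhds muL) :=
    (continuous_fst.tendsto _).comp hlim
  have htlim : Filter.Tendsto (fun k => t (φ k)) Filter.atTop (nhds tL) :=
    (continuous_snd.tendsto _).comp hlim
  have hφle : ∀ k : ℕ, (k:ℝ) ≤ (φ k : ℝ) := fun k => by exact_mod_cast hφ.le_apply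
  have honeφ : Filter.Tendsto (fun k : ℕ => 1/((φ k:ℝ)+1)) Filter.atTop (nhds 0) :=
    squeeze_zero (fun k => by positivity)
      (fun k => one_div_le_one_div_of_le (by positivity) (by linarith [hφle k])) hone
  have hxφ : Filter.Tendsto (fun k => x (φ k)) Filter.atTop (nhds xs) :=
    hxlim.comp hφ.tendsto_atTop
  have hresφ : ∀ k, kktRes f g Eqs (x (φ k)) (lam (φ k)) ≤ 1/((φ k:ℝ)+1) := fun k => hres (φ k)
  have htIcc : tL ∈ Set.Icc (0:ℝ) 1 := hmemL.2
  rcases eq_or_lt_of_le htIcc.1 with htL | htL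
  · -- tL = 0 : unbounded multipliers, contradict MFCQ
    have hnormlim : Filter.Tendsto (fun k => ‖μ (φ k)‖) Filter.atTop (nhds ‖muL‖) :=
      (continuous_norm.tendsto _).comp hμlim
    have hnormlim' : Filter.Tendsto (fun k => ‖μ (φ k)‖) Filter.atTop (nhds 1) := by
      have h2 : Filter.Tendsto (fun k => 1 - t (φ k)) Filter.atTop (nhds (1 - tL)) :=
        tendsto_const_nhds.sub htlim
      rw [← htL, sub_zero] at h2
      exact h2.congr fun k => (hμnorm (φ k)).symm
    have hμ1 : ‖muL‖ = 1 := tendsto_nhds_unique hnormlim hnormlim'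
    have hstat : ∑ i, muL i • pgrad (g i) xs = 0 := by
      set w : ℕ → EuclideanSpace ℝ (Fin n) := fun k =>
        t k • pgrad f (x k) - ∑ i, μ k i • pgrad (g i) (x k) with hw_def
      have hw_eq : ∀ k, w k = t k • (pgrad f (x k) - ∑ i, lam k i • pgrad (g i) (x k)) := by
        intro k
        rw [hw_def]
        simp only []
        rw [smul_sub, Finset.smul_sum]
        congr 1
        refine Finset.sum_congr rfl fun i _ => ?_
        rw [hμapp, ← smul_smul]
      have hwnorm : ∀ k, ‖w k‖ ≤ 1/((k:ℝ)+1) := by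
        intro k
        rw [hw_eq, norm_smul, Real.norm_eq_abs, abs_of_pos (ht0 k)]
        calc t k * ‖pgrad f (x k) - ∑ i, lam k i • pgrad (g i) (x k)‖
            ≤ 1 * (1/((k:ℝ)+1)) :=
              mul_le_mul (ht1 k) ((stat_le_kktRes f g Eqs).trans (hres k)) (norm_nonneg _)
                zero_le_one
        _ = 1/((k:ℝ)+1) := one_mul _
      have hwlim0 : Filter.Tendsto (fun k => w (φ k)) Filter.atTop (nhds 0) := by
        rw [tendsto_zero_iff_norm_tendsto_zero]
        exact squeeze_zero (fun k => norm_nonneg _) (fun k => hwnorm (φ k)) honeφ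
      have hwlim : Filter.Tendsto (fun k => w (φ k)) Filter.atTop
          (nhds (tL • pgrad f xs - ∑ i, muL i • pgrad (g i) xs)) := by
        apply Filter.Tendsto.sub
        · exact htlim.smul (((continuous_pgrad f).tendsto xs).comp hxφ)
        · apply tendsto_finset_sum
          intro i _
          exact (((continuous_lam_apply i).tendsto muL).comp hμlim).smul
            (((continuous_pgrad (g i)).tendsto xs).comp hxφ)
      have huniq := tendsto_nhds_unique hwlim hwlim0
      rw [← htL, zero_smul, zero_sub, neg_eq_zero] at huniq
      exact huniq
    have hcompl : ∑ i ∈ Eqsᶜ, muL i * peval xs (g i) = 0 := by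
      set c : ℕ → ℝ := fun k => ∑ i ∈ Eqsᶜ, μ k i * peval (x k) (g i) with hc_def
      have hc_eq : ∀ k, c k = t k * ∑ i ∈ Eqsᶜ, lam k i * peval (x k) (g i) := by
        intro k
        rw [hc_def]
        simp only []
        rw [Finset.mul_sum]
        exact Finset.sum_congr rfl fun i _ => by rw [hμapp]; ring
      have hcnorm : ∀ k, |c k| ≤ 1/((k:ℝ)+1) := by
        intro k
        rw [hc_eq, abs_mul, abs_of_pos (ht0 k)]
        calc t k * |∑ i ∈ Eqsᶜ, lam k i * peval (x k) (g i)|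
            ≤ 1 * (1/((k:ℝ)+1)) :=
              mul_le_mul (ht1 k) ((comp_le_kktRes f g Eqs).trans (hres k)) (abs_nonneg _)
                zero_le_one
        _ = 1/((k:ℝ)+1) := one_mul _
      have hclim0 : Filter.Tendsto (fun k => c (φ k)) Filter.atTop (nhds 0) := by
        apply squeeze_zero_norm (fun k => ?_) honeφ
        rw [Real.norm_eq_abs]
        exact hcnorm (φ k)
      have hclim : Filter.Tendsto (fun k => c (φ k)) Filter.atTop
          (nhds (∑ i ∈ Eqsᶜ, muL i * peval xs (g i))) := by
        apply tendsto_finset_sum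
        intro i _
        exact (((continuous_lam_apply i).tendsto muL).comp hμlim).mul
          (((continuous_peval (g i)).tendsto xs).comp hxφ)
      exact tendsto_nhds_unique hclim hclim0
    have hsign : ∀ i ∉ Eqs, 0 ≤ muL i := by
      intro i hi
      have hle : ∀ k, -(μ k i) ≤ 1/((k:ℝ)+1) := by
        intro k
        have h1 : max (-(lam k i)) 0 ≤ 1/((k:ℝ)+1) :=
          (dual_le_kktRes f g Eqs (Finset.mem_compl.mpr hi)).trans (hres k)
        calc -(μ k i) = t k * (-(lam k i)) := by rw [hμapp]; ring
        _ ≤ t k * max (-(lam k i)) 0 := mul_le_mul_of_nonneg_left (le_max_left _ _) (ht0 k).le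
        _ ≤ 1 * max (-(lam k i)) 0 := mul_le_mul_of_nonneg_right (ht1 k) (le_max_right _ _)
        _ = max (-(lam k i)) 0 := one_mul _
        _ ≤ 1/((k:ℝ)+1) := h1
      have hilim : Filter.Tendsto (fun k => -(μ (φ k) i)) Filter.atTop (nhds (-(muL i))) :=
        (((continuous_lam_apply i).tendsto muL).comp hμlim).neg
      have := le_of_tendsto_of_tendsto' hilim honeφ fun k => hle (φ k)
      linarith
    obtain ⟨v, hva, hve, hli⟩ := hmfcq
    have hdi : ∀ i, (∑ kk, pgrad (g i) xs kk * v kk) = ⟪pgrad (g i) xs, v⟫ := by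
      intro i
      rw [PiLp.inner_apply]
      exact Finset.sum_congr rfl fun k _ => by simp [mul_comm]
    have hpair : ∑ i ∈ Eqsᶜ, muL i * ⟪pgrad (g i) xs, v⟫ = 0 := by
      have h0 : ⟪∑ i, muL i • pgrad (g i) xs, v⟫ = (0:ℝ) := by
        rw [hstat, inner_zero_left]
      rw [sum_inner] at h0
      simp_rw [real_inner_smul_left] at h0
      rw [← Finset.sum_add_sum_compl Eqs] at h0
      have hEzero : ∑ i ∈ Eqs, muL i * ⟪pgrad (g i) xs, v⟫ = 0 :=
        Finset.sum_eq_zero fun j hj => by rw [← hdi j, hve j hj, mul_zero]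
      rw [hEzero, zero_add] at h0
      exact h0
    have hcompl_each : ∀ i ∈ Eqsᶜ, muL i * peval xs (g i) = 0 :=
      (Finset.sum_eq_zero_iff_of_nonneg fun j hj =>
        mul_nonneg (hsign j (Finset.mem_compl.mp hj))
          ((hkkt.2.2 j (Finset.mem_compl.mp hj)).1)).mp hcompl
    have hterm : ∀ j ∈ Eqsᶜ, muL j * ⟪pgrad (g j) xs, v⟫ ≤ 0 := by
      intro j hj
      have hj' := Finset.mem_compl.mp hj
      rcases eq_or_lt_of_le (hkkt.2.2 j hj').1 with hg0 | hgpos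
      · have hdneg : ⟪pgrad (g j) xs, v⟫ < 0 := by
          rw [← hdi j]
          exact hva j hj' hg0.symm
        exact mul_nonpos_of_nonneg_of_nonpos (hsign j hj') hdneg.le
      · have hz : muL j = 0 := by
          rcases mul_eq_zero.mp (hcompl_each j hj) with h | h
          · exact h
          · exact absurd h (ne_of_gt hgpos)
        rw [hz, zero_mul]
    have hμI : ∀ i ∉ Eqs, muL i = 0 := by
      intro i hi
      have heach := (Finset.sum_eq_zero_iff_of_nonpos hterm).mp hpair i (Finset.mem_compl.mpr hi)
      rcases eq_or_lt_of_le (hkkt.2.2 i hi).1 with hg0 | hgpos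
      · have hdneg : ⟪pgrad (g i) xs, v⟫ < 0 := by
          rw [← hdi i]
          exact hva i hi hg0.symm
        rcases mul_eq_zero.mp heach with h | h
        · exact h
        · exact absurd h (ne_of_lt hdneg)
      · rcases mul_eq_zero.mp (hcompl_each i (Finset.mem_compl.mpr hi)) with h | h
        · exact h
        · exact absurd h (ne_of_gt hgpos)
    have hstatE : ∑ i ∈ Eqs, muL i • pgrad (g i) xs = 0 := by
      rw [← Finset.sum_add_sum_compl Eqs] at hstat
      have hz : ∑ i ∈ Eqsᶜ, muL i • pgrad (g i) xs = 0 :=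
        Finset.sum_eq_zero fun i hi => by rw [hμI i (Finset.mem_compl.mp hi), zero_smul]
      rw [hz, add_zero] at hstat
      exact hstat
    have hμE : ∀ i ∈ Eqs, muL i = 0 := by
      have hli' := Fintype.linearIndependent_iff.mp hli fun j => muL j.1
      have hsum : ∑ j : {j // j ∈ Eqs}, muL j.1 • pgrad (g j.1) xs = 0 := by
        rw [Finset.sum_coe_sort Eqs fun i => muL i • pgrad (g i) xs]
        exact hstatE
      intro i hi
      exact hli' hsum ⟨i, hi⟩
    have hμ0 : muL = 0 := by
      ext i
      by_cases hi : i ∈ Eqs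
      · simpa using hμE i hi
      · simpa using hμI i hi
    rw [hμ0, norm_zero] at hμ1
    norm_num at hμ1
  · -- 0 < tL : multipliers converge, contradict distance to Λ*
    have hlamφ : ∀ k, lam (φ k) = (t (φ k))⁻¹ • μ (φ k) := by
      intro k
      rw [hμ_def]
      simp only []
      rw [smul_smul, inv_mul_cancel₀ (ne_of_gt (ht0 _)), one_smul]
    have hlamlim : Filter.Tendsto (fun k => lam (φ k)) Filter.atTop (nhds (tL⁻¹ • muL)) := by
      rw [show (fun k => lam (φ k)) = fun k => (t (φ k))⁻¹ • μ (φ k) from funext hlamφ]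
      exact (htlim.inv₀ (ne_of_gt htL)).smul hμlim
    set lamb := tL⁻¹ • muL with hlamb_def
    have hreslim : Filter.Tendsto (fun k => kktRes f g Eqs (x (φ k)) (lam (φ k))) Filter.atTop
        (nhds (kktRes f g Eqs xs lamb)) := tendsto_kktRes f g Eqs hxφ hlamlim
    have hle0 : kktRes f g Eqs xs lamb ≤ 0 :=
      le_of_tendsto_of_tendsto' hreslim honeφ hresφ
    have hmem : lamb ∈ S :=
      isKKT_of_kktRes_eq_zero f g Eqs (le_antisymm hle0 (kktRes_nonneg f g Eqs))
    have hdlim : Filter.Tendsto (fun k => Metric.infDist (lam (φ k)) S) Filter.atTop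
        (nhds (Metric.infDist lamb S)) :=
      ((Metric.continuous_infDist_pt S).tendsto lamb).comp hlamlim
    have hfin : η ≤ Metric.infDist lamb S :=
      ge_of_tendsto hdlim (Filter.Eventually.of_forall fun k => (hd (φ k)).le)
    rw [Metric.infDist_zero_of_mem hmem] at hfin
    linarith

/-- Primal error bound in terms of ω. -/
theorem primal_error_bound_omega {n m : ℕ} (f : MvPolynomial (Fin n) ℝ)
    (g : Fin m → MvPolynomial (Fin n) ℝ) (Eqs : Finset (Fin m))
    (xs : EuclideanSpace ℝ (Fin n)) (lams : EuclideanSpace ℝ (Fin m))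
    (hkkt : IsKKT f g Eqs xs lams) (hmfcq : MFCQat g Eqs xs)
    (hattain : ∃ δ > (0:ℝ), ∀ x : EuclideanSpace ℝ (Fin n), ‖x - xs‖ ≤ δ →
      ∃ lam : EuclideanSpace ℝ (Fin m), kktRes f g Eqs x lam = omga f g Eqs x)
    (τ γ η : ℝ) (hτ : 0 < τ) (hγ : 0 < γ) (hη : 0 < η)
    (hEB : ∀ (x : EuclideanSpace ℝ (Fin n)) (lam : EuclideanSpace ℝ (Fin m)),
      ‖x - xs‖ ≤ η → Metric.infDist lam (dualSols f g Eqs xs) ≤ η →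
      Metric.infDist (pairL2 x lam) (primalDualSet f g Eqs xs) ≤
        τ * (kktRes f g Eqs x lam) ^ γ) :
    ∃ ε₁ > (0:ℝ), ∀ x : EuclideanSpace ℝ (Fin n), ‖x - xs‖ ≤ ε₁ →
      ‖x - xs‖ ≤ τ * (omga f g Eqs x) ^ γ := by
  obtain ⟨δ, hδ, hatt⟩ := hattain
  obtain ⟨ε, hε, c, hc, hnear⟩ := near_dualSols ⟨lams, hkkt⟩ hmfcq hη
  have h0 : kktRes f g Eqs xs lams = 0 := kktRes_eq_zero_of_isKKT f g Eqs hkkt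
  have hcont : Filter.Tendsto (fun y : EuclideanSpace ℝ (Fin n) => kktRes f g Eqs y lams)
      (nhds xs) (nhds 0) := by
    have h := tendsto_kktRes f g Eqs (l := nhds xs)
      (x := fun y : EuclideanSpace ℝ (Fin n) => y) (lam := fun _ => lams)
      tendsto_id tendsto_const_nhds
    rwa [h0] at h
  have hev : ∀ᶠ y in nhds xs, kktRes f g Eqs y lams < c := hcont.eventually_lt_const hc
  obtain ⟨ε₂, hε₂, hball⟩ := Metric.eventually_nhds_iff.mp hev
  refine ⟨min δ (min η (min ε (ε₂/2))), by positivity, fun x hx => ?_⟩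
  have hxδ : ‖x - xs‖ ≤ δ := hx.trans (min_le_left _ _)
  have hxη : ‖x - xs‖ ≤ η := hx.trans ((min_le_right _ _).trans (min_le_left _ _))
  have hxε : ‖x - xs‖ ≤ ε :=
    hx.trans ((min_le_right _ _).trans ((min_le_right _ _).trans (min_le_left _ _)))
  have hxε₂ : ‖x - xs‖ ≤ ε₂/2 :=
    hx.trans ((min_le_right _ _).trans ((min_le_right _ _).trans (min_le_right _ _)))
  obtain ⟨lam, hlam⟩ := hatt x hxδ
  have homega_le : omga f g Eqs x ≤ kktRes f g Eqs x lams := by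
    refine ciInf_le ⟨0, ?_⟩ lams
    rintro r ⟨l, rfl⟩
    exact kktRes_nonneg f g Eqs
  have hklams : kktRes f g Eqs x lams ≤ c := by
    have hdx : dist x xs < ε₂ := by
      rw [dist_eq_norm]
      linarith
    exact (hball hdx).le
  have hkc : kktRes f g Eqs x lam ≤ c := by
    rw [hlam]
    exact homega_le.trans hklams
  have hdist : Metric.infDist lam (dualSols f g Eqs xs) ≤ η := hnear x lam hxε hkc
  have hEBx := hEB x lam hxη hdist
  rw [hlam] at hEBx
  refine le_trans ?_ hEBx
  apply my_le_infDist
  · exact ⟨pairL2 xs lams, rfl, hkkt⟩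
  · rintro z ⟨hz1, hz2⟩
    have hz1' : z.fst = xs := hz1
    calc ‖x - xs‖ = dist x xs := (dist_eq_norm _ _).symm
    _ = Real.sqrt (dist x xs ^ 2) := (Real.sqrt_sq dist_nonneg).symm
    _ ≤ Real.sqrt (dist (pairL2 x lam).fst z.fst ^ 2 + dist (pairL2 x lam).snd z.snd ^ 2) := by
        apply Real.sqrt_le_sqrt
        have hfst : dist (pairL2 x lam).fst z.fst = dist x xs := by rw [hz1']; rfl
        rw [hfst]
        nlinarith [sq_nonneg (dist (pairL2 x lam).snd z.snd)]
    _ = dist (pairL2 x lam) z := (WithLp.prod_dist_eq_of_L2 _ _).symm
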